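/- Let K₁ and K₂ be compact subsets of C(Σ, M) consisting entirely of nonconstant maps. Then there exist open sets U₁ ⊇ K₁ and U₂ ⊇ K₂ in C(Σ, M) and a compact subset K of ℂ not containing 0 such that the set { a ∈ ℂ : a ≠ 0 and there exists h ∈ U₁ with h ∘ g_a ∈ U₂ } is contained in K. (Equivalent reformulation (B) of the main properness theorem, for compact sets of maps.) -/

import Mathlib

open OnePoint

/-- The reparametrization `g_a : Σ → Σ` of the Riemann sphere `Σ = OnePoint ℂ`
extending `z ↦ a · z` on `ℂ` and fixing the point at infinity. -/
noncomputable def gA (a : ℂ) (ha : a ≠ 0) : C(OnePoint ℂ, OnePoint ℂ) where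
  toFun := OnePoint.map (fun z => a * z)
  continuous_toFun := (Homeomorph.onePointCongr (Homeomorph.mulLeft₀ a ha)).continuous

lemma gA_coe (a : ℂ) (ha : a ≠ 0) (z : ℂ) :
    gA a ha (z : OnePoint ℂ) = ((a * z : ℂ) : OnePoint ℂ) := rfl

lemma gA_inv_cancel {M : Type*} [TopologicalSpace M] (h : C(OnePoint ℂ, M)) (a : ℂ) (ha : a ≠ 0) :
    (h.comp (gA a ha)).comp (gA a⁻¹ (inv_ne_zero ha)) = h := by
  ext x
  induction x using OnePoint.rec with
  | infty => rfl
  | coe z =>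
    simp only [ContinuousMap.comp_apply, gA_coe]
    rw [show a * (a⁻¹ * z) = z by field_simp]

/-- Uniform equicontinuity at 0 for a compact family. -/
lemma equicont_at_zero {M : Type*} [MetricSpace M] [CompactSpace M]
    (K : Set C(OnePoint ℂ, M)) (hK : IsCompact K) {ε : ℝ} (hε : 0 < ε) :
    ∃ δ > 0, ∀ f ∈ K, ∀ w : ℂ, ‖w‖ < δ → dist (f w) (f ((0:ℂ) : OnePoint ℂ)) < ε := by
  set S : Set (C(OnePoint ℂ, M) × OnePoint ℂ) :=
    (K ×ˢ Set.univ) ∩ {p | ε ≤ dist (p.1 p.2) (p.1 ((0:ℂ) : OnePoint ℂ))} with hS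
  have hcont : Continuous fun p : C(OnePoint ℂ, M) × OnePoint ℂ =>
      dist (p.1 p.2) (p.1 ((0:ℂ) : OnePoint ℂ)) :=
    Continuous.dist continuous_eval ((continuous_eval_const _).comp continuous_fst)
  have hScl : IsClosed {p : C(OnePoint ℂ, M) × OnePoint ℂ |
      ε ≤ dist (p.1 p.2) (p.1 ((0:ℂ) : OnePoint ℂ))} := isClosed_le continuous_const hcont
  have hScomp : IsCompact S := (hK.prod isCompact_univ).inter_right hScl
  have hT : IsCompact (Prod.snd '' S) := hScomp.image continuous_snd
  have h0 : ((0:ℂ) : OnePoint ℂ) ∉ Prod.snd '' S := by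
    rintro ⟨⟨f, x⟩, ⟨⟨hf, -⟩, hd⟩, hx⟩
    simp only at hx
    subst hx
    simp only [Set.mem_setOf_eq, dist_self] at hd
    linarith
  have hopen : IsOpen ((fun w : ℂ => (w : OnePoint ℂ)) ⁻¹' (Prod.snd '' S)ᶜ) :=
    hT.isClosed.isOpen_compl.preimage OnePoint.continuous_coe
  have h0mem : (0:ℂ) ∈ (fun w : ℂ => (w : OnePoint ℂ)) ⁻¹' (Prod.snd '' S)ᶜ := h0
  obtain ⟨δ, hδ, hball⟩ := Metric.isOpen_iff.1 hopen 0 h0mem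
  refine ⟨δ, hδ, fun f hf w hw => ?_⟩
  have : (w : OnePoint ℂ) ∉ Prod.snd '' S := by
    apply hball
    simpa [Metric.mem_ball, dist_zero_right] using hw
  by_contra hcon
  push_neg at hcon
  exact this ⟨(f, (w : OnePoint ℂ)), ⟨⟨hf, trivial⟩, hcon⟩, rfl⟩

/-- Uniform oscillation: a compact family of nonconstant maps has two finite points within a
fixed radius where values are uniformly far apart. -/
lemma uniform_osc {M : Type*} [MetricSpace M] [CompactSpace M]
    (K : Set C(OnePoint ℂ, M)) (hK : IsCompact K)
    (hnc : ∀ f ∈ K, ∃ x y, f x ≠ f y) :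
    ∃ ε > 0, ∃ R > 0, ∀ k ∈ K, ∃ x y : ℂ, ‖x‖ ≤ R ∧ ‖y‖ ≤ R ∧ ε ≤ dist (k x) (k y) := by
  rcases K.eq_empty_or_nonempty with hKe | hKne
  · exact ⟨1, one_pos, 1, one_pos, by simp [hKe]⟩
  have key : ∀ k : K, ∃ x y : ℂ, (k : C(OnePoint ℂ, M)) x ≠ (k : C(OnePoint ℂ, M)) y := by
    rintro ⟨k, hk⟩
    by_contra hcon
    push_neg at hcon
    obtain ⟨x, y, hxy⟩ := hnc k hk
    have hcl : IsClosed {z : OnePoint ℂ | k z = k ((0:ℂ) : OnePoint ℂ)} :=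
      isClosed_eq k.continuous continuous_const
    have hdense : DenseRange ((↑) : ℂ → OnePoint ℂ) := OnePoint.denseRange_coe
    have hsub : closure (Set.range ((↑) : ℂ → OnePoint ℂ)) ⊆
        {z : OnePoint ℂ | k z = k ((0:ℂ) : OnePoint ℂ)} :=
      hcl.closure_subset_iff.2 (by rintro _ ⟨w, rfl⟩; exact hcon w 0)
    have hconst : ∀ z : OnePoint ℂ, k z = k ((0:ℂ) : OnePoint ℂ) := fun z => hsub (hdense z)
    exact hxy ((hconst x).trans (hconst y).symm)
  choose x y hxy using key
  set ε : K → ℝ := fun k => dist ((k : C(OnePoint ℂ, M)) (x k)) ((k : C(OnePoint ℂ, M)) (y k))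
    with hε
  have hεpos : ∀ k : K, 0 < ε k := fun k => dist_pos.2 (hxy k)
  set V : K → Set C(OnePoint ℂ, M) := fun k =>
    {k' | ε k / 2 < dist (k' (x k)) (k' (y k))} with hV
  have hVopen : ∀ k : K, IsOpen (V k) := fun k =>
    isOpen_lt continuous_const ((continuous_eval_const _).dist (continuous_eval_const _))
  have hcover : K ⊆ ⋃ k : K, V k := by
    intro k hk
    exact Set.mem_iUnion.2 ⟨⟨k, hk⟩, by exact half_lt_self (hεpos ⟨k, hk⟩)⟩
  obtain ⟨t, ht⟩ := hK.elim_finite_subcover V hVopen hcover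
  have htne : t.Nonempty := by
    obtain ⟨k, hk⟩ := hKne
    obtain ⟨i, hi, -⟩ := Set.mem_iUnion₂.1 (ht hk)
    exact ⟨i, hi⟩
  set ε0 : ℝ := t.inf' htne (fun i => ε i / 2) with hε0
  have hε0pos : 0 < ε0 := by
    rw [hε0, Finset.lt_inf'_iff]
    exact fun i _ => half_pos (hεpos i)
  set R : ℝ := max (t.sup' htne fun i => max ‖x i‖ ‖y i‖) 1 with hR
  refine ⟨ε0, hε0pos, R, lt_of_lt_of_le one_pos (le_max_right _ _), fun k hk => ?_⟩
  obtain ⟨i, hi, hki⟩ := Set.mem_iUnion₂.1 (ht hk)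
  refine ⟨x i, y i, ?_, ?_, ?_⟩
  · exact le_trans (le_max_left _ _) (le_trans
      (Finset.le_sup' (fun i => max ‖x i‖ ‖y i‖) hi) (le_max_left _ _))
  · exact le_trans (le_max_right _ _) (le_trans
      (Finset.le_sup' (fun i => max ‖x i‖ ‖y i‖) hi) (le_max_left _ _))
  · exact le_of_lt (lt_of_le_of_lt (Finset.inf'_le _ hi) hki)

theorem tst : True := trivial

/-- One-sided bound: maps near `K₁` composed with `g_a` for small `a` stay away from `K₂`. -/
lemma one_sided {M : Type*} [MetricSpace M] [CompactSpace M]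
    (K₁ K₂ : Set C(OnePoint ℂ, M)) (hK₁ : IsCompact K₁) (hK₂ : IsCompact K₂)
    (hnc₂ : ∀ f ∈ K₂, ∃ x y, f x ≠ f y) :
    ∃ τ > 0, ∃ r > 0, ∀ a : ℂ, ∀ ha : a ≠ 0, ‖a‖ < r →
      ∀ h ∈ Metric.thickening τ K₁, h.comp (gA a ha) ∉ Metric.thickening τ K₂ := by
  obtain ⟨ε, hεpos, R, hRpos, hosc⟩ := uniform_osc K₂ hK₂ hnc₂
  obtain ⟨δ, hδpos, hequi⟩ := equicont_at_zero K₁ hK₁ (by positivity : (0:ℝ) < ε / 8)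
  refine ⟨ε / 8, by positivity, δ / R, by positivity, fun a ha har h hh hcomp => ?_⟩
  obtain ⟨f, hf, hdf⟩ := Metric.mem_thickening_iff.1 hh
  obtain ⟨k, hk, hdk⟩ := Metric.mem_thickening_iff.1 hcomp
  obtain ⟨x, y, hx, hy, hd⟩ := hosc k hk
  have hax : ‖a * x‖ < δ := by
    calc ‖a * x‖ = ‖a‖ * ‖x‖ := norm_mul a x
    _ ≤ ‖a‖ * R := mul_le_mul_of_nonneg_left hx (norm_nonneg a)
    _ < (δ / R) * R := mul_lt_mul_of_pos_right har hRpos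
    _ = δ := div_mul_cancel₀ δ (ne_of_gt hRpos)
  have hay : ‖a * y‖ < δ := by
    calc ‖a * y‖ = ‖a‖ * ‖y‖ := norm_mul a y
    _ ≤ ‖a‖ * R := mul_le_mul_of_nonneg_left hy (norm_nonneg a)
    _ < (δ / R) * R := mul_lt_mul_of_pos_right har hRpos
    _ = δ := div_mul_cancel₀ δ (ne_of_gt hRpos)
  have e3 : dist (f ((a * x : ℂ) : OnePoint ℂ)) (f ((0:ℂ) : OnePoint ℂ)) < ε / 8 :=
    hequi f hf _ hax
  have e3' : dist (f ((a * y : ℂ) : OnePoint ℂ)) (f ((0:ℂ) : OnePoint ℂ)) < ε / 8 :=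
    hequi f hf _ hay
  have e1 : dist (k (x : OnePoint ℂ)) (h ((a * x : ℂ) : OnePoint ℂ)) < ε / 8 := by
    have := ContinuousMap.dist_apply_le_dist (f := h.comp (gA a ha)) (g := k) (x : OnePoint ℂ)
    rw [ContinuousMap.comp_apply, gA_coe] at this
    rw [dist_comm]
    linarith
  have e1' : dist (k (y : OnePoint ℂ)) (h ((a * y : ℂ) : OnePoint ℂ)) < ε / 8 := by
    have := ContinuousMap.dist_apply_le_dist (f := h.comp (gA a ha)) (g := k) (y : OnePoint ℂ)
    rw [ContinuousMap.comp_apply, gA_coe] at this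
    rw [dist_comm]
    linarith
  have e2 : dist (h ((a * x : ℂ) : OnePoint ℂ)) (f ((a * x : ℂ) : OnePoint ℂ)) < ε / 8 :=
    lt_of_le_of_lt (ContinuousMap.dist_apply_le_dist _) hdf
  have e2' : dist (h ((a * y : ℂ) : OnePoint ℂ)) (f ((a * y : ℂ) : OnePoint ℂ)) < ε / 8 :=
    lt_of_le_of_lt (ContinuousMap.dist_apply_le_dist _) hdf
  have t1 : dist (k (x : OnePoint ℂ)) (k (y : OnePoint ℂ)) ≤
      dist (k (x : OnePoint ℂ)) (f ((0:ℂ) : OnePoint ℂ)) +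
      dist (f ((0:ℂ) : OnePoint ℂ)) (k (y : OnePoint ℂ)) := dist_triangle _ _ _
  have t2 : dist (k (x : OnePoint ℂ)) (f ((0:ℂ) : OnePoint ℂ)) ≤
      dist (k (x : OnePoint ℂ)) (h ((a * x : ℂ) : OnePoint ℂ)) +
      dist (h ((a * x : ℂ) : OnePoint ℂ)) (f ((a * x : ℂ) : OnePoint ℂ)) +
      dist (f ((a * x : ℂ) : OnePoint ℂ)) (f ((0:ℂ) : OnePoint ℂ)) := dist_triangle4 _ _ _ _
  have t3 : dist (f ((0:ℂ) : OnePoint ℂ)) (k (y : OnePoint ℂ)) ≤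
      dist (f ((0:ℂ) : OnePoint ℂ)) (f ((a * y : ℂ) : OnePoint ℂ)) +
      dist (f ((a * y : ℂ) : OnePoint ℂ)) (h ((a * y : ℂ) : OnePoint ℂ)) +
      dist (h ((a * y : ℂ) : OnePoint ℂ)) (k (y : OnePoint ℂ)) := dist_triangle4 _ _ _ _
  rw [dist_comm (f ((0:ℂ) : OnePoint ℂ))] at t3
  rw [dist_comm (f ((a * y : ℂ) : OnePoint ℂ)) (h _)] at t3
  rw [dist_comm (h ((a * y : ℂ) : OnePoint ℂ)) (k _)] at t3
  have s1 : dist (f ((0:ℂ) : OnePoint ℂ)) (k (y : OnePoint ℂ)) =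
      dist (k (y : OnePoint ℂ)) (f ((0:ℂ) : OnePoint ℂ)) := dist_comm _ _
  have e3'' : dist (f ((0:ℂ) : OnePoint ℂ)) (f ((a * y : ℂ) : OnePoint ℂ)) < ε / 8 := by
    rw [dist_comm]; exact e3'
  linarith

/-- Reformulation (B) of the main properness theorem: for compact sets `K₁, K₂` of nonconstant
maps there are open neighbourhoods `U₁ ⊇ K₁`, `U₂ ⊇ K₂` such that the set of group elements
carrying `U₁` into `U₂` is contained in a compact subset of `ℂ* ⊂ ℂ`. -/
theorem group_part_precompact_of_compact {M : Type*} [MetricSpace M] [CompactSpace M]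
    (K₁ K₂ : Set C(OnePoint ℂ, M)) (hK₁ : IsCompact K₁) (hK₂ : IsCompact K₂)
    (hnc₁ : ∀ f ∈ K₁, ∃ x y, f x ≠ f y) (hnc₂ : ∀ f ∈ K₂, ∃ x y, f x ≠ f y) :
    ∃ U₁ U₂ : Set C(OnePoint ℂ, M), IsOpen U₁ ∧ IsOpen U₂ ∧ K₁ ⊆ U₁ ∧ K₂ ⊆ U₂ ∧
      ∃ K : Set ℂ, IsCompact K ∧ (0 : ℂ) ∉ K ∧
        {a : ℂ | ∃ ha : a ≠ 0, ∃ h ∈ U₁, h.comp (gA a ha) ∈ U₂} ⊆ K := by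
  obtain ⟨τ₁, hτ₁, r₁, hr₁, hC₁⟩ := one_sided K₁ K₂ hK₁ hK₂ hnc₂
  obtain ⟨τ₂, hτ₂, r₂, hr₂, hC₂⟩ := one_sided K₂ K₁ hK₂ hK₁ hnc₁
  set τ : ℝ := min τ₁ τ₂ with hτ
  have hτpos : 0 < τ := lt_min hτ₁ hτ₂
  refine ⟨Metric.thickening τ K₁, Metric.thickening τ K₂,
    Metric.isOpen_thickening, Metric.isOpen_thickening,
    Metric.self_subset_thickening hτpos K₁, Metric.self_subset_thickening hτpos K₂,
    {z : ℂ | r₁ ≤ ‖z‖} ∩ Metric.closedBall 0 r₂⁻¹, ?_, ?_, ?_⟩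
  · exact IsCompact.of_isClosed_subset (isCompact_closedBall 0 r₂⁻¹)
      ((isClosed_le continuous_const continuous_norm).inter Metric.isClosed_closedBall)
      Set.inter_subset_right
  · rintro ⟨h0, -⟩
    exact absurd (show r₁ ≤ (0:ℝ) by simpa using h0) (not_le.2 hr₁)
  · rintro a ⟨ha, h, hh1, hh2⟩
    constructor
    · simp only [Set.mem_setOf_eq]
      by_contra hcon
      push_neg at hcon
      exact hC₁ a ha hcon h (Metric.thickening_mono (min_le_left _ _) K₁ hh1)
        (Metric.thickening_mono (min_le_left _ _) K₂ hh2)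
    · rw [Metric.mem_closedBall, dist_zero_right]
      by_contra hcon
      push_neg at hcon
      have hinv : ‖a⁻¹‖ < r₂ := by
        rw [norm_inv]
        calc ‖a‖⁻¹ < (r₂⁻¹)⁻¹ := by
              apply inv_strictAnti₀ (by positivity) hcon
        _ = r₂ := inv_inv r₂
      have := hC₂ a⁻¹ (inv_ne_zero ha) hinv (h.comp (gA a ha))
        (Metric.thickening_mono (min_le_right _ _) K₂ hh2)
      rw [gA_inv_cancel] at this
      exact this (Metric.thickening_mono (min_le_right _ _) K₁ hh1)
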